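/- (First decomposition theorem) Every vector of rate constants (q_{ij}) of a Markov chain with positive equilibrium P* is a finite conic (nonnegative linear) combination of rate-constant vectors of simple directed cycles A_{i_1} → A_{i_2} → ⋯ → A_{i_k} → A_{i_1} with rates q_{i_{j+1} i_j} = κ/p*_{i_j} (κ > 0), each of which has the same equilibrium P*. -/

import Mathlib

open Finset

lemma exists_cycle {n : ℕ} (q : Fin n → Fin n → ℝ) (hqd : ∀ i, q i i = 0)
    (hstep : ∀ i : Fin n, (∃ j, 0 < q i j) → ∃ j, 0 < q j i)
    (i₀ j₀ : Fin n) (h0 : 0 < q i₀ j₀) :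
    ∃ (k : ℕ) (c : Fin (k + 2) → Fin n), Function.Injective c ∧
      ∀ l : Fin (k + 2), 0 < q (c (l + 1)) (c l) := by
  classical
  have step : ∀ x : {i : Fin n // ∃ j, 0 < q i j},
      ∃ y : {i : Fin n // ∃ j, 0 < q i j}, 0 < q y.1 x.1 := by
    rintro ⟨i, hi⟩
    obtain ⟨j, hj⟩ := hstep i hi
    exact ⟨⟨j, ⟨i, hj⟩⟩, hj⟩
  choose f hf using step
  set x₀ : {i : Fin n // ∃ j, 0 < q i j} := ⟨i₀, j₀, h0⟩ with hx₀
  set s : ℕ → Fin n := fun t => (f^[t] x₀).1 with hs_def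
  have hs : ∀ t, 0 < q (s (t + 1)) (s t) := by
    intro t
    have := hf (f^[t] x₀)
    simpa [hs_def, Function.iterate_succ_apply'] using this
  have hsne : ∀ t, s (t + 1) ≠ s t := by
    intro t h
    have := hs t; rw [h, hqd] at this; exact lt_irrefl _ this
  obtain ⟨a, b, hab, hsab⟩ := Finite.exists_ne_map_eq_of_infinite s
  have hP : ∃ t2, ∃ t1, t1 < t2 ∧ s t1 = s t2 := by
    rcases lt_or_gt_of_ne hab with h | h
    · exact ⟨b, a, h, hsab⟩
    · exact ⟨a, b, h, hsab.symm⟩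
  obtain ⟨t1, ht1, heq⟩ := Nat.find_spec hP
  set t2 := Nat.find hP with ht2def
  have hinj : ∀ u v, u < t2 → v < t2 → s u = s v → u = v := by
    intro u v hu hv huv
    by_contra hne
    rcases lt_or_gt_of_ne hne with h | h
    · exact Nat.find_min hP hv ⟨u, h, huv⟩
    · exact Nat.find_min hP hu ⟨v, h, huv.symm⟩
  have h2 : t1 + 2 ≤ t2 := by
    rcases Nat.lt_or_ge (t1 + 1) t2 with h | h
    · omega
    · exfalso
      have ht : t2 = t1 + 1 := by omega
      exact hsne t1 (by rw [← ht]; exact heq.symm)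
  refine ⟨t2 - t1 - 2, fun l => s (t1 + l.val), ?_, ?_⟩
  · intro l l' h
    have h1 : t1 + l.val < t2 := by have := l.isLt; omega
    have h2' : t1 + l'.val < t2 := by have := l'.isLt; omega
    have := hinj _ _ h1 h2' h
    exact Fin.ext (by omega)
  · intro l
    have hvadd : ((l + 1 : Fin (t2 - t1 - 2 + 2))).val = (l.val + 1) % (t2 - t1 - 2 + 2) := by
      rw [Fin.add_def]
      congr 1
    rcases Nat.lt_or_ge (l.val + 1) (t2 - t1 - 2 + 2) with h | h
    · have hv : ((l + 1 : Fin (t2 - t1 - 2 + 2))).val = l.val + 1 := by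
        rw [hvadd, Nat.mod_eq_of_lt h]
      simp only [hv]
      have : t1 + (l.val + 1) = (t1 + l.val) + 1 := by omega
      rw [this]
      exact hs (t1 + l.val)
    · have hl : l.val = t2 - t1 - 1 := by have := l.isLt; omega
      have hv : ((l + 1 : Fin (t2 - t1 - 2 + 2))).val = 0 := by
        rw [hvadd]
        have : l.val + 1 = t2 - t1 - 2 + 2 := by omega
        simp [this]
      simp only [hv]
      have e1 : t1 + 0 = t1 := rfl
      rw [e1, heq]
      have e2 : t2 = (t1 + l.val) + 1 := by omega
      have := hs (t1 + l.val)
      rwa [← e2] at this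


def IsSimpleCycleChain {n : ℕ} (ps : Fin n → ℝ) (κ : ℝ)
    (Q : Fin n → Fin n → ℝ) : Prop :=
  0 < κ ∧ ∃ (k : ℕ) (c : Fin (k + 2) → Fin n), Function.Injective c ∧
    (∀ l : Fin (k + 2), Q (c (l + 1)) (c l) = κ / ps (c l)) ∧
    (∀ i j : Fin n, (¬ ∃ l : Fin (k + 2), i = c (l + 1) ∧ j = c l) → Q i j = 0)

lemma decomp_aux {n : ℕ} (ps : Fin n → ℝ) (hps : ∀ i, 0 < ps i) :
    ∀ N : ℕ, ∀ q : Fin n → Fin n → ℝ,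
      (∀ i j, i ≠ j → 0 ≤ q i j) → (∀ i, q i i = 0) →
      (∀ i, ∑ j ∈ Finset.univ.erase i, q i j * ps j
          = (∑ j ∈ Finset.univ.erase i, q j i) * ps i) →
      ((Finset.univ.filter fun p : Fin n × Fin n => 0 < q p.1 p.2).card ≤ N) →
      ∃ (m : ℕ) (Q : Fin m → Fin n → Fin n → ℝ) (a : Fin m → ℝ),
        (∀ t, 0 ≤ a t) ∧ (∀ t, ∃ κ : ℝ, IsSimpleCycleChain ps κ (Q t)) ∧
        q = ∑ t, a t • Q t := by
  classical
  intro N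
  induction N with
  | zero =>
    intro q hq hqd hbal hcard
    have hzero : ∀ i j, q i j = 0 := by
      intro i j
      rcases eq_or_ne i j with rfl | hij
      · exact hqd i
      · by_contra h
        have hpos : 0 < q i j := lt_of_le_of_ne (hq i j hij) (Ne.symm h)
        have hmem : (i, j) ∈ (Finset.univ.filter fun p : Fin n × Fin n => 0 < q p.1 p.2) :=
          mem_filter.2 ⟨mem_univ _, hpos⟩
        have := card_pos.2 ⟨_, hmem⟩
        omega
    refine ⟨0, fun _ => 0, fun _ => 0, fun t => le_refl _, fun t => t.elim0, ?_⟩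
    funext i j
    simp [hzero]
  | succ N IH =>
    intro q hq hqd hbal hcard
    by_cases hE : ∃ i j, 0 < q i j
    · obtain ⟨i₀, j₀, h0⟩ := hE
      -- step property from balance
      have hstep : ∀ i : Fin n, (∃ j, 0 < q i j) → ∃ j, 0 < q j i := by
        intro i ⟨j, hj⟩
        have hji : j ≠ i := by
          rintro rfl; rw [hqd] at hj; exact lt_irrefl _ hj
        have hLpos : 0 < ∑ j' ∈ Finset.univ.erase i, q i j' * ps j' := by
          refine Finset.sum_pos' (fun j' hj' => ?_) ⟨j, mem_erase.2 ⟨hji, mem_univ _⟩,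
            mul_pos hj (hps j)⟩
          exact mul_nonneg (hq i j' (Ne.symm (mem_erase.1 hj').1)) (hps j').le
        rw [hbal i] at hLpos
        have hsum : 0 < ∑ j' ∈ Finset.univ.erase i, q j' i := by
          by_contra h
          push_neg at h
          have := mul_nonpos_iff.2 (Or.inr ⟨h, (hps i).le⟩)
          linarith
        obtain ⟨j', _, hj'⟩ := Finset.exists_lt_of_sum_lt (by simpa using hsum.trans_le (le_of_eq rfl) : (∑ _j ∈ Finset.univ.erase i, (0:ℝ)) < ∑ j' ∈ Finset.univ.erase i, q j' i)
        exact ⟨j', hj'⟩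
      obtain ⟨k, c, hcinj, hcyc⟩ := exists_cycle q hqd hstep i₀ j₀ h0
      have hne1 : ∀ l : Fin (k + 2), c (l + 1) ≠ c l := by
        intro l h
        have := hcyc l; rw [h, hqd] at this; exact lt_irrefl _ this
      -- κ = minimal edge flow
      set κ : ℝ := (Finset.univ : Finset (Fin (k + 2))).inf' ⟨0, mem_univ 0⟩
        (fun l => q (c (l + 1)) (c l) * ps (c l)) with hκdef
      have hκpos : 0 < κ := by
        rw [hκdef]
        exact (Finset.lt_inf'_iff _).2 fun l _ => mul_pos (hcyc l) (hps (c l))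
      have hκle : ∀ l, κ ≤ q (c (l + 1)) (c l) * ps (c l) :=
        fun l => Finset.inf'_le _ (mem_univ l)
      obtain ⟨l₀, _, hl₀⟩ := Finset.exists_mem_eq_inf' (⟨0, mem_univ 0⟩ :
        (Finset.univ : Finset (Fin (k + 2))).Nonempty)
        (fun l => q (c (l + 1)) (c l) * ps (c l))
      set Q₀ : Fin n → Fin n → ℝ := fun i j =>
        if ∃ l : Fin (k + 2), i = c (l + 1) ∧ j = c l then κ / ps j else 0 with hQ₀def
      have hQ₀chain : IsSimpleCycleChain ps κ Q₀ :=
        ⟨hκpos, k, c, hcinj, fun l => if_pos ⟨l, rfl, rfl⟩, fun i j h => if_neg h⟩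
      have hQ₀nonneg : ∀ i j, 0 ≤ Q₀ i j := by
        intro i j
        rw [hQ₀def]
        dsimp only
        split
        · exact div_nonneg hκpos.le (hps j).le
        · exact le_refl _
      have hQ₀sum : ∀ i j, Q₀ i j =
          ∑ l : Fin (k + 2), if i = c (l + 1) ∧ j = c l then κ / ps j else 0 := by
        intro i j
        by_cases h : ∃ l : Fin (k + 2), i = c (l + 1) ∧ j = c l
        · obtain ⟨l₁, h1⟩ := h
          rw [hQ₀def]
          dsimp only
          rw [if_pos ⟨l₁, h1⟩]
          rw [Finset.sum_eq_single l₁]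
          · rw [if_pos h1]
          · intro l' _ hne
            refine if_neg ?_
            rintro ⟨ha, hb⟩
            exact hne (hcinj (hb ▸ h1.2 ▸ rfl))
          · intro h'; exact absurd (mem_univ l₁) h'
        · rw [hQ₀def]
          dsimp only
          rw [if_neg h, Finset.sum_eq_zero]
          intro l _
          exact if_neg fun hl => h ⟨l, hl⟩
      -- balance sums for Q₀
      have key1 : ∀ i, ∑ j ∈ Finset.univ.erase i, Q₀ i j * ps j
          = ∑ l : Fin (k + 2), if i = c (l + 1) then κ else 0 := by
        intro i
        calc ∑ j ∈ Finset.univ.erase i, Q₀ i j * ps j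
            = ∑ j ∈ Finset.univ.erase i, ∑ l : Fin (k + 2),
                (if i = c (l + 1) ∧ j = c l then κ else 0) := by
              refine Finset.sum_congr rfl fun j _ => ?_
              rw [hQ₀sum, Finset.sum_mul]
              refine Finset.sum_congr rfl fun l _ => ?_
              by_cases h : i = c (l + 1) ∧ j = c l
              · rw [if_pos h, if_pos h, div_mul_cancel₀ _ (hps j).ne']
              · rw [if_neg h, if_neg h, zero_mul]
          _ = ∑ l : Fin (k + 2), ∑ j ∈ Finset.univ.erase i,
                (if i = c (l + 1) ∧ j = c l then κ else 0) := Finset.sum_comm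
          _ = ∑ l : Fin (k + 2), if i = c (l + 1) then κ else 0 := by
              refine Finset.sum_congr rfl fun l _ => ?_
              by_cases h : i = c (l + 1)
              · have he : ∀ j, (if i = c (l + 1) ∧ j = c l then κ else 0)
                    = (if j = c l then κ else 0) := fun j => by simp [h]
                rw [Finset.sum_congr rfl fun j _ => he j,
                  Finset.sum_ite_eq' (Finset.univ.erase i) (c l) (fun _ => κ),
                  if_pos (mem_erase.2 ⟨by rw [h]; exact fun hh => hne1 l hh.symm, mem_univ _⟩),
                  if_pos h]
              · rw [if_neg h, Finset.sum_eq_zero]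
                intro j _
                exact if_neg fun hh => h hh.1
      have key2 : ∀ i, (∑ j ∈ Finset.univ.erase i, Q₀ j i) * ps i
          = ∑ l : Fin (k + 2), if i = c l then κ else 0 := by
        intro i
        have : ∑ j ∈ Finset.univ.erase i, Q₀ j i
            = ∑ l : Fin (k + 2), if i = c l then κ / ps i else 0 := by
          calc ∑ j ∈ Finset.univ.erase i, Q₀ j i
              = ∑ j ∈ Finset.univ.erase i, ∑ l : Fin (k + 2),
                  (if j = c (l + 1) ∧ i = c l then κ / ps i else 0) := by
                refine Finset.sum_congr rfl fun j _ => ?_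
                exact hQ₀sum j i
            _ = ∑ l : Fin (k + 2), ∑ j ∈ Finset.univ.erase i,
                  (if j = c (l + 1) ∧ i = c l then κ / ps i else 0) := Finset.sum_comm
            _ = ∑ l : Fin (k + 2), if i = c l then κ / ps i else 0 := by
                refine Finset.sum_congr rfl fun l _ => ?_
                by_cases h : i = c l
                · have he : ∀ j, (if j = c (l + 1) ∧ i = c l then κ / ps i else 0)
                      = (if j = c (l + 1) then κ / ps i else 0) := fun j => by simp [h]
                  rw [Finset.sum_congr rfl fun j _ => he j,
                    Finset.sum_ite_eq' (Finset.univ.erase i) (c (l + 1)) (fun _ => κ / ps i),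
                    if_pos (mem_erase.2 ⟨by rw [h]; exact hne1 l, mem_univ _⟩), if_pos h]
                · rw [if_neg h, Finset.sum_eq_zero]
                  intro j _
                  exact if_neg fun hh => h hh.2
        rw [this, Finset.sum_mul]
        refine Finset.sum_congr rfl fun l _ => ?_
        by_cases h : i = c l
        · rw [if_pos h, if_pos h, div_mul_cancel₀ _ (hps i).ne']
        · rw [if_neg h, if_neg h, zero_mul]
      have keyshift : ∀ i, (∑ l : Fin (k + 2), if i = c (l + 1) then κ else 0)
          = ∑ l : Fin (k + 2), if i = c l then κ else 0 := by
        intro i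
        exact Fintype.sum_equiv (Equiv.addRight (1 : Fin (k + 2)))
          (fun l => if i = c (l + 1) then κ else 0)
          (fun l => if i = c l then κ else 0) (fun l => rfl)
      have hbalQ : ∀ i, ∑ j ∈ Finset.univ.erase i, Q₀ i j * ps j
          = (∑ j ∈ Finset.univ.erase i, Q₀ j i) * ps i := by
        intro i
        rw [key1, key2, keyshift]
      -- the remainder chain
      set q' : Fin n → Fin n → ℝ := fun i j => q i j - Q₀ i j with hq'def
      have hq'nonneg : ∀ i j, i ≠ j → 0 ≤ q' i j := by
        intro i j hij
        rw [hq'def]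
        dsimp only
        rw [hQ₀def]
        dsimp only
        split
        · rename_i h
          obtain ⟨l, h1, h2⟩ := h
          subst h1; subst h2
          rw [sub_nonneg, div_le_iff₀ (hps (c l))]
          exact hκle l
        · rw [sub_zero]
          exact hq i j hij
      have hQ₀diag : ∀ i, Q₀ i i = 0 := by
        intro i
        rw [hQ₀def]
        dsimp only
        refine if_neg ?_
        rintro ⟨l, h1, h2⟩
        exact hne1 l (h1 ▸ h2 ▸ rfl)
      have hq'diag : ∀ i, q' i i = 0 := by
        intro i
        rw [hq'def]; dsimp only; rw [hqd, hQ₀diag, sub_zero]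
      have hq'bal : ∀ i, ∑ j ∈ Finset.univ.erase i, q' i j * ps j
          = (∑ j ∈ Finset.univ.erase i, q' j i) * ps i := by
        intro i
        rw [hq'def]
        dsimp only
        simp only [sub_mul, Finset.sum_sub_distrib]
        rw [hbal i, hbalQ i]
      -- support decreases
      have hsub : (Finset.univ.filter fun p : Fin n × Fin n => 0 < q' p.1 p.2)
          ⊂ (Finset.univ.filter fun p : Fin n × Fin n => 0 < q p.1 p.2) := by
        constructor
        · intro p hp
          have hp' := (mem_filter.1 hp).2
          refine mem_filter.2 ⟨mem_univ _, ?_⟩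
          have : q' p.1 p.2 ≤ q p.1 p.2 := by
            rw [hq'def]; dsimp only
            linarith [hQ₀nonneg p.1 p.2]
          linarith
        · intro hsup
          have hmem : ((c (l₀ + 1), c l₀) : Fin n × Fin n) ∈
              (Finset.univ.filter fun p : Fin n × Fin n => 0 < q p.1 p.2) :=
            mem_filter.2 ⟨mem_univ _, hcyc l₀⟩
          have hmem' := hsup hmem
          have hz : q' (c (l₀ + 1)) (c l₀) = 0 := by
            rw [hq'def]; dsimp only
            rw [hQ₀def]; dsimp only
            have hκeq : κ = q (c (l₀ + 1)) (c l₀) * ps (c l₀) := hl₀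
            rw [if_pos ⟨l₀, rfl, rfl⟩, hκeq, mul_div_assoc,
              div_self (hps (c l₀)).ne', mul_one, sub_self]
          have := (mem_filter.1 hmem').2
          rw [hz] at this
          exact lt_irrefl _ this
      have hcard' : (Finset.univ.filter fun p : Fin n × Fin n => 0 < q' p.1 p.2).card ≤ N := by
        have := Finset.card_lt_card hsub
        omega
      obtain ⟨m, Q, a, ha, hchain, hsum⟩ := IH q' hq'nonneg hq'diag hq'bal hcard'
      refine ⟨m + 1, Fin.cons Q₀ Q, Fin.cons 1 a, ?_, ?_, ?_⟩
      · intro t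
        refine Fin.cases ?_ ?_ t
        · rw [Fin.cons_zero]; exact zero_le_one
        · intro t'; rw [Fin.cons_succ]; exact ha t'
      · intro t
        refine Fin.cases ?_ ?_ t
        · exact ⟨κ, by rw [Fin.cons_zero]; exact hQ₀chain⟩
        · intro t'
          obtain ⟨κ', h'⟩ := hchain t'
          exact ⟨κ', by rw [Fin.cons_succ]; exact h'⟩
      · rw [Fin.sum_univ_succ]
        simp only [Fin.cons_zero, Fin.cons_succ, one_smul]
        rw [← hsum]
        funext i j
        simp [hq'def]
    · push_neg at hE
      have hzero : ∀ i j, q i j = 0 := by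
        intro i j
        rcases eq_or_ne i j with rfl | hij
        · exact hqd i
        · exact le_antisymm (hE i j) (hq i j hij)
      refine ⟨0, fun _ => 0, fun _ => 0, fun t => le_refl _, fun t => t.elim0, ?_⟩
      funext i j
      simp [hzero]

/-- **first decomposition theorem.** Every Markov chain with
positive equilibrium `P*` is a finite conic combination of simple directed
cycles with the same equilibrium. -/
theorem first_decomposition_theorem
    (n : ℕ) (ps : Fin n → ℝ) (hps : ∀ i, 0 < ps i)
    (q : Fin n → Fin n → ℝ)
    (hq : ∀ i j, i ≠ j → 0 ≤ q i j) (hqd : ∀ i, q i i = 0)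
    (hbal : ∀ i, ∑ j ∈ Finset.univ.erase i, q i j * ps j
        = (∑ j ∈ Finset.univ.erase i, q j i) * ps i) :
    ∃ (m : ℕ) (Q : Fin m → Fin n → Fin n → ℝ) (a : Fin m → ℝ),
      (∀ t, 0 ≤ a t) ∧ (∀ t, ∃ κ : ℝ, IsSimpleCycleChain ps κ (Q t)) ∧
      q = ∑ t, a t • Q t :=
  decomp_aux ps hps _ q hq hqd hbal le_rfl
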